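/- Let γ₁ > 0 and τ₁ < 0. Let 𝕂 : ℝ → ℝ be differentiable on (0,1) with 𝕂 and 𝕂′ bounded there, 𝕂(s) = 0 for s ∉ [0,1), and s𝕂(s) → 0 as s → 1⁻. Then ∫_1^∞ x^{−1/γ₁−1} · ((x^{τ₁/γ₁} − 1)/(γ₁τ₁)) · g_𝕂(x^{−1/γ₁}) dx = ∫_0^1 s^{−τ₁} 𝕂(s) ds, where g_𝕂(s) := 𝕂(s) + s𝕂′(s) is the derivative on (0,1) of Ψ_𝕂(s) := s𝕂(s). -/

import Mathlib

open MeasureTheory Filter Set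

set_option maxHeartbeats 1000000

/-- Bias-term identity of the paper:
`∫_1^∞ x^{-1/γ₁-1} ((x^{τ₁/γ₁} - 1)/(γ₁τ₁)) g_𝕂(x^{-1/γ₁}) dx = ∫_0^1 s^{-τ₁} 𝕂(s) ds`,
where `g_𝕂(s) = 𝕂(s) + s𝕂'(s)` is the derivative of `Ψ_𝕂(s) = s𝕂(s)` on `(0,1)`. -/
theorem kernel_bias_integral
    (γ₁ τ₁ : ℝ) (hγ₁ : 0 < γ₁) (hτ₁ : τ₁ < 0)
    (K : ℝ → ℝ)
    (hK_diff : ∀ s ∈ Set.Ioo (0 : ℝ) 1, DifferentiableAt ℝ K s)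
    (hK_bdd : ∃ M, ∀ s ∈ Set.Ioo (0 : ℝ) 1, |K s| ≤ M ∧ |deriv K s| ≤ M)
    (hK_supp : ∀ s ∉ Set.Ico (0 : ℝ) 1, K s = 0)
    (hK_lim : Tendsto (fun s => s * K s) (nhdsWithin 1 (Set.Iio 1)) (nhds 0)) :
    ∫ x in Set.Ioi (1 : ℝ),
        x ^ (-1 / γ₁ - 1) * ((x ^ (τ₁ / γ₁) - 1) / (γ₁ * τ₁)) *
          (K (x ^ (-1 / γ₁)) + x ^ (-1 / γ₁) * deriv K (x ^ (-1 / γ₁)))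
      = ∫ s in (0 : ℝ)..1, s ^ (-τ₁) * K s := by
  obtain ⟨M, hM⟩ := hK_bdd
  have hγne : γ₁ ≠ 0 := hγ₁.ne'
  have hτne : τ₁ ≠ 0 := hτ₁.ne
  have hM0 : 0 ≤ M := le_trans (abs_nonneg _) (hM (1/2) (by norm_num)).1
  set c : ℝ := -1 / γ₁ with hc
  have hcneg : c < 0 := div_neg_of_neg_of_pos (by norm_num) hγ₁
  set u : ℝ → ℝ := fun s => (s ^ (-τ₁) - 1) / τ₁ with hu
  set g : ℝ → ℝ := fun s => K s + s * deriv K s with hgdef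
  set h : ℝ → ℝ := fun s => u s * g s with hh
  -- measurability on (0,1)
  have hKcont : ContinuousOn K (Ioo 0 1) := fun s hs =>
    (hK_diff s hs).continuousAt.continuousWithinAt
  have hKmeas : AEStronglyMeasurable K (volume.restrict (Ioo (0:ℝ) 1)) :=
    hKcont.aestronglyMeasurable measurableSet_Ioo
  have hderivmeas : AEStronglyMeasurable (deriv K) (volume.restrict (Ioo (0:ℝ) 1)) :=
    (measurable_deriv K).aestronglyMeasurable
  have hrpowmeas : AEStronglyMeasurable (fun s : ℝ => s ^ (-τ₁))
      (volume.restrict (Ioo (0:ℝ) 1)) :=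
    (Real.continuous_rpow_const (by linarith)).aestronglyMeasurable
  have hgmeas : AEStronglyMeasurable g (volume.restrict (Ioo (0:ℝ) 1)) :=
    hKmeas.add (aestronglyMeasurable_id.mul hderivmeas)
  have humeas : AEStronglyMeasurable u (volume.restrict (Ioo (0:ℝ) 1)) := by
    have huu : u = fun s => (s ^ (-τ₁) - 1) * τ₁⁻¹ := by
      funext s; rw [hu]; ring
    rw [huu]
    exact (hrpowmeas.sub aestronglyMeasurable_const).mul aestronglyMeasurable_const
  have hhmeas : AEStronglyMeasurable h (volume.restrict (Ioo (0:ℝ) 1)) := humeas.mul hgmeas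
  have hKrmeas : AEStronglyMeasurable (fun s => s ^ (-τ₁) * K s)
      (volume.restrict (Ioo (0:ℝ) 1)) := hrpowmeas.mul hKmeas
  -- bounds on (0,1)
  have hbound : ∀ s ∈ Ioo (0:ℝ) 1, |u s| ≤ 1 / (-τ₁) ∧ |g s| ≤ 2 * M ∧
      |s ^ (-τ₁) * K s| ≤ M := by
    intro s hs
    have h0 : (0:ℝ) < s ^ (-τ₁) := Real.rpow_pos_of_pos hs.1 _
    have h1 : s ^ (-τ₁) ≤ 1 := Real.rpow_le_one hs.1.le hs.2.le (by linarith)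
    refine ⟨?_, ?_, ?_⟩
    · rw [hu, abs_div, abs_of_neg hτ₁]
      exact (div_le_div_iff_of_pos_right (by linarith)).mpr
        (by rw [abs_le]; constructor <;> linarith)
    · calc |g s| ≤ |K s| + |s * deriv K s| := abs_add_le _ _
        _ ≤ M + |s| * |deriv K s| := by rw [abs_mul]; exact add_le_add_left (hM s hs).1 _
        _ ≤ M + 1 * M := by
            refine add_le_add_right (mul_le_mul ?_ (hM s hs).2 (abs_nonneg _) zero_le_one) _
            rw [abs_of_pos hs.1]; exact hs.2.le
        _ = 2 * M := by ring
    · calc |s ^ (-τ₁) * K s| = |s ^ (-τ₁)| * |K s| := abs_mul _ _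
        _ ≤ 1 * M := mul_le_mul (by rw [abs_of_pos h0]; exact h1) (hM s hs).1
            (abs_nonneg _) zero_le_one
        _ = M := one_mul M
  -- integrability helpers
  have hfin : volume (Ioo (0:ℝ) 1) ≠ ⊤ := by
    simp [Real.volume_Ioo]
  have hInt : ∀ (f : ℝ → ℝ), AEStronglyMeasurable f (volume.restrict (Ioo (0:ℝ) 1)) →
      (∀ s ∈ Ioo (0:ℝ) 1, |f s| ≤ (2 * M + 1) * (1 + 1 / (-τ₁))) →
      IntegrableOn f (Ioo (0:ℝ) 1) := by
    intro f hmeas hb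
    refine ⟨hmeas, ?_⟩
    apply HasFiniteIntegral.restrict_of_bounded (C := (2 * M + 1) * (1 + 1 / (-τ₁))) hfin.lt_top
    filter_upwards [ae_restrict_mem measurableSet_Ioo] with s hs
    exact hb s hs
  have hCτ : (0:ℝ) < 1 / (-τ₁) := div_pos one_pos (by linarith)
  have hIh : IntegrableOn h (Ioo (0:ℝ) 1) := by
    refine hInt h hhmeas fun s hs => ?_
    obtain ⟨h1, h2, _⟩ := hbound s hs
    calc |h s| = |u s| * |g s| := abs_mul _ _
      _ ≤ (1 / (-τ₁)) * (2 * M) := mul_le_mul h1 h2 (abs_nonneg _) hCτ.le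
      _ ≤ (2 * M + 1) * (1 + 1 / (-τ₁)) := by nlinarith
  have hIK : IntegrableOn (fun s => s ^ (-τ₁) * K s) (Ioo (0:ℝ) 1) := by
    refine hInt _ hKrmeas fun s hs => ?_
    obtain ⟨_, _, h3⟩ := hbound s hs
    nlinarith
  -- Step A: change of variables x ↦ x ^ c
  have himg : (fun x : ℝ => x ^ c) '' Ioi 1 = Ioo 0 1 := by
    ext s
    constructor
    · rintro ⟨x, hx, rfl⟩
      exact ⟨Real.rpow_pos_of_pos (lt_trans one_pos hx) _,
        Real.rpow_lt_one_of_one_lt_of_neg hx hcneg⟩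
    · rintro hs
      refine ⟨s ^ (-γ₁), ?_, ?_⟩
      · exact (Real.one_lt_rpow_iff_of_pos hs.1).2 (Or.inr ⟨hs.2, by linarith⟩)
      · show (s ^ (-γ₁)) ^ c = s
        rw [← Real.rpow_mul hs.1.le]
        have : -γ₁ * c = 1 := by rw [hc]; field_simp
        rw [this, Real.rpow_one]
  have hderiv' : ∀ x ∈ Ioi (1:ℝ), HasDerivWithinAt (fun x : ℝ => x ^ c)
      (c * x ^ (c - 1)) (Ioi 1) x := by
    intro x hx
    exact (Real.hasDerivAt_rpow_const (Or.inl (lt_trans one_pos hx).ne')).hasDerivWithinAt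
  have hinj : InjOn (fun x : ℝ => x ^ c) (Ioi 1) := by
    intro x hx y hy hxy
    have hx0 : (0:ℝ) < x := lt_trans one_pos hx
    have hy0 : (0:ℝ) < y := lt_trans one_pos hy
    have hxy' : x ^ c = y ^ c := hxy
    have : (x ^ c) ^ (1/c) = (y ^ c) ^ (1/c) := by rw [hxy']
    rwa [← Real.rpow_mul hx0.le, ← Real.rpow_mul hy0.le, mul_one_div, div_self hcneg.ne,
      Real.rpow_one, Real.rpow_one] at this
  have hA : ∫ x in Ioi (1:ℝ),
      x ^ (-1 / γ₁ - 1) * ((x ^ (τ₁ / γ₁) - 1) / (γ₁ * τ₁)) *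
        (K (x ^ (-1 / γ₁)) + x ^ (-1 / γ₁) * deriv K (x ^ (-1 / γ₁)))
      = ∫ s in Ioo (0:ℝ) 1, h s := by
    rw [← himg, integral_image_eq_integral_abs_deriv_smul measurableSet_Ioi hderiv' hinj h]
    refine setIntegral_congr_fun measurableSet_Ioi fun x hx => ?_
    have hx0 : (0:ℝ) < x := lt_trans one_pos hx
    have hxc1 : (0:ℝ) < x ^ (c - 1) := Real.rpow_pos_of_pos hx0 _
    have key : x ^ (τ₁ / γ₁) = (x ^ c) ^ (-τ₁) := by
      rw [← Real.rpow_mul hx0.le]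
      congr 1
      rw [hc]
      field_simp
    rw [smul_eq_mul, hh, hu, hc]
    simp only
    rw [key, abs_mul, abs_of_neg hcneg, abs_of_pos hxc1]
    have : -1 / γ₁ - 1 = c - 1 := by rw [hc]
    rw [this]
    have hgx : K (x ^ c) + x ^ c * deriv K (x ^ c) = g (x ^ c) := by rw [hgdef]
    rw [hgx]
    rw [hc]
    field_simp
  -- Step B: integration by parts / FTC on (0,1)
  set F : ℝ → ℝ := fun s => u s * (s * K s) with hF
  set F' : ℝ → ℝ := fun s => h s - s ^ (-τ₁) * K s with hF'
  have hFderiv : ∀ s ∈ Ioo (0:ℝ) 1, HasDerivAt F (F' s) s := by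
    intro s hs
    have hs0 : s ≠ 0 := hs.1.ne'
    have hu' : HasDerivAt u (-(s ^ (-τ₁ - 1))) s := by
      have : HasDerivAt (fun s : ℝ => s ^ (-τ₁)) (-τ₁ * s ^ (-τ₁ - 1)) s :=
        Real.hasDerivAt_rpow_const (Or.inl hs0)
      have h2 := (this.sub_const 1).div_const τ₁
      refine h2.congr_deriv ?_
      rw [neg_mul, neg_div, mul_div_cancel_left₀ _ hτne]
    have hv' : HasDerivAt (fun s => s * K s) (K s + s * deriv K s) s := by
      have := (hasDerivAt_id s).mul ((hK_diff s hs).hasDerivAt)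
      refine this.congr_deriv ?_
      simp
    have := hu'.mul hv'
    refine this.congr_deriv ?_
    have hpow : s ^ (-τ₁ - 1) * s = s ^ (-τ₁) := by
      nth_rewrite 2 [← Real.rpow_one s]
      rw [← Real.rpow_add hs.1]
      norm_num
    rw [hF', hh, hu, hgdef]
    simp only
    rw [← hpow]
    ring
  have hIF' : IntervalIntegrable F' volume 0 1 := by
    rw [intervalIntegrable_iff_integrableOn_Ioo_of_le zero_le_one]
    exact hIh.sub hIK
  have hlim0 : Tendsto F (nhdsWithin 0 (Ioi 0)) (nhds 0) := by
    have hulim : Tendsto u (nhdsWithin 0 (Ioi 0)) (nhds (-1 / τ₁)) := by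
      have : Tendsto (fun s : ℝ => s ^ (-τ₁)) (nhdsWithin 0 (Ioi 0)) (nhds 0) := by
        have := (Real.continuousAt_rpow_const 0 (-τ₁) (Or.inr (by linarith))).tendsto
        rw [Real.zero_rpow (by linarith : -τ₁ ≠ 0)] at this
        exact this.mono_left nhdsWithin_le_nhds
      have h2 := (this.sub (tendsto_const_nhds (x := (1:ℝ)))).div_const τ₁
      rw [hu]
      convert h2 using 2
      norm_num
    have hvlim : Tendsto (fun s => s * K s) (nhdsWithin 0 (Ioi 0)) (nhds 0) := by
      refine squeeze_zero_norm' (a := fun s => M * s) ?_ ?_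
      · filter_upwards [self_mem_nhdsWithin,
          Ioo_mem_nhdsGT_of_mem (by norm_num : (0:ℝ) ∈ Ico (0:ℝ) 1)] with s hs hs'
        calc ‖s * K s‖ = |s| * |K s| := abs_mul _ _
          _ ≤ |s| * M := mul_le_mul_of_nonneg_left (hM s hs').1 (abs_nonneg _)
          _ = M * s := by rw [abs_of_pos hs]; ring
      · have : Tendsto (fun s : ℝ => M * s) (nhdsWithin 0 (Ioi 0)) (nhds (M * 0)) :=
          (tendsto_const_nhds.mul tendsto_id).mono_left nhdsWithin_le_nhds
        simpa using this
    have := hulim.mul hvlim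
    simpa using this
  have hlim1 : Tendsto F (nhdsWithin 1 (Iio 1)) (nhds 0) := by
    have hulim : Tendsto u (nhdsWithin 1 (Iio 1)) (nhds 0) := by
      have : Tendsto (fun s : ℝ => s ^ (-τ₁)) (nhds 1) (nhds 1) := by
        have := (Real.continuousAt_rpow_const 1 (-τ₁) (Or.inl one_ne_zero)).tendsto
        rwa [Real.one_rpow] at this
      have h2 := ((this.sub (tendsto_const_nhds (x := (1:ℝ)))).div_const τ₁).mono_left
        (nhdsWithin_le_nhds (s := Iio (1:ℝ)))
      rw [hu]
      convert h2 using 2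
      norm_num
    have := hulim.mul hK_lim
    simpa using this
  have hB : ∫ s in (0:ℝ)..1, F' s = 0 := by
    rw [intervalIntegral.integral_eq_sub_of_hasDerivAt_of_tendsto one_pos hFderiv hIF'
      hlim0 hlim1]
    simp
  have hB' : ∫ s in Ioo (0:ℝ) 1, h s = ∫ s in Ioo (0:ℝ) 1, s ^ (-τ₁) * K s := by
    have h1 : ∫ s in Ioo (0:ℝ) 1, F' s = 0 := by
      have h2 := hB
      rwa [intervalIntegral.integral_of_le zero_le_one, integral_Ioc_eq_integral_Ioo] at h2
    rw [hF'] at h1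
    rw [integral_sub hIh hIK] at h1
    linarith
  rw [hA, hB', intervalIntegral.integral_of_le zero_le_one, ← integral_Ioc_eq_integral_Ioo]
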